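/- Let μ be a probability measure on 𝕋² of finite logarithmic energy, and let C[μ](z1,z2) = ∫_{𝕋²} (1−e^{iθ1}z1)^{−1}(1−e^{iθ2}z2)^{−1} dμ. Then C[μ] belongs to the Bergman space A²(𝔻²)=𝔇_{−1}, with ‖C[μ]‖²_{𝔇_{−1}} = Σ_{k,l≥0} |μ̂(k,l)|²/((k+1)(l+1)), which is bounded by a constant times the energy I[μ]. -/

import Mathlib

open scoped ENNReal NNReal Classical
open Filter

/-- Weight `(k+1)^α` as an extended nonnegative real. -/
noncomputable def wt (α : ℝ) (k : ℕ) : ℝ≥0∞ := ((k : ℝ≥0∞) + 1) ^ α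

/-- Squared norm of the Dirichlet-type space `𝔇_α` of the bidisk, at the level of
Taylor coefficients `a k l`. -/
noncomputable def Dnorm2 (α : ℝ) (a : ℕ → ℕ → ℂ) : ℝ≥0∞ :=
  ∑' p : ℕ × ℕ, wt α p.1 * wt α p.2 * ((‖a p.1 p.2‖₊ : ℝ≥0∞)) ^ 2

/-- Squared norm of the one-variable Dirichlet-type space `D_α`. -/
noncomputable def dnorm2 (α : ℝ) (a : ℕ → ℂ) : ℝ≥0∞ :=
  ∑' k : ℕ, wt α k * ((‖a k‖₊ : ℝ≥0∞)) ^ 2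

/-- Cauchy product (coefficients of the product of two power series in two variables). -/
noncomputable def conv2 (p a : ℕ → ℕ → ℂ) : ℕ → ℕ → ℂ := fun k l =>
  ∑ i ∈ Finset.range (k + 1), ∑ j ∈ Finset.range (l + 1), p i j * a (k - i) (l - j)

/-- Cauchy product in one variable. -/
noncomputable def conv1 (p a : ℕ → ℂ) : ℕ → ℂ := fun k =>
  ∑ i ∈ Finset.range (k + 1), p i * a (k - i)

/-- Coefficients of the constant function `1` in two variables. -/
def one2 : ℕ → ℕ → ℂ := fun k l => if k = 0 ∧ l = 0 then 1 else 0

/-- Coefficients of the constant function `1` in one variable. -/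
def one1 : ℕ → ℂ := fun k => if k = 0 then 1 else 0

/-- `p` is (the coefficient sequence of) a polynomial in `𝔓_n`. -/
def IsPoly2 (n : ℕ) (p : ℕ → ℕ → ℂ) : Prop := ∀ k l, n < k ∨ n < l → p k l = 0

/-- `p` is a one-variable polynomial of degree at most `n`. -/
def IsPoly1 (n : ℕ) (p : ℕ → ℂ) : Prop := ∀ k, n < k → p k = 0

/-- Cyclicity of `a` in `𝔇_α`: some sequence of polynomials `p n` has `‖p n · f - 1‖_α → 0`. -/
def Cyclic2 (α : ℝ) (a : ℕ → ℕ → ℂ) : Prop :=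
  ∃ p : ℕ → ℕ → ℕ → ℂ, (∀ n, ∃ m, IsPoly2 m (p n)) ∧
    Tendsto (fun n => Dnorm2 α (fun k l => conv2 (p n) a k l - one2 k l)) atTop (nhds 0)

/-- Cyclicity of `a` in the one-variable space `D_α`. -/
def Cyclic1 (α : ℝ) (a : ℕ → ℂ) : Prop :=
  ∃ p : ℕ → ℕ → ℂ, (∀ n, ∃ m, IsPoly1 m (p n)) ∧
    Tendsto (fun n => dnorm2 α (fun k => conv1 (p n) a k - one1 k)) atTop (nhds 0)

/-- Squared distance `dist²_{𝔇_α}(1, f · 𝔓_n)`. -/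
noncomputable def distP2 (α : ℝ) (n : ℕ) (a : ℕ → ℕ → ℂ) : ℝ≥0∞ :=
  ⨅ (p : ℕ → ℕ → ℂ) (_ : IsPoly2 n p), Dnorm2 α (fun k l => conv2 p a k l - one2 k l)

/-- Fourier coefficient `μ̂(k,l)` of a measure on `ℝ × ℝ` (angles on the torus `𝕋²`). -/
noncomputable def muhat (μ : MeasureTheory.Measure (ℝ × ℝ)) (k l : ℤ) : ℂ :=
  ∫ θ, Complex.exp (-Complex.I * ((k : ℂ) * (θ.1 : ℂ) + (l : ℂ) * (θ.2 : ℂ))) ∂μ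

/-- Logarithmic energy of a measure on `𝕋²`, in its Fourier representation. -/
noncomputable def energy (μ : MeasureTheory.Measure (ℝ × ℝ)) : ℝ≥0∞ :=
  1 + (∑' k : ℕ, ((‖muhat μ ((k : ℤ) + 1) 0‖₊ : ℝ≥0∞)) ^ 2 / ((k : ℝ≥0∞) + 1))
    + (∑' l : ℕ, ((‖muhat μ 0 ((l : ℤ) + 1)‖₊ : ℝ≥0∞)) ^ 2 / ((l : ℝ≥0∞) + 1))
    + (1 / 2) * ∑' q : {k : ℤ // k ≠ 0} × ℕ,
        ((‖muhat μ q.1.1 ((q.2 : ℤ) + 1)‖₊ : ℝ≥0∞)) ^ 2 /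
          ((q.1.1.natAbs : ℝ≥0∞) * ((q.2 : ℝ≥0∞) + 1))

/-- Squared Bergman `A²(𝔻²) = 𝔇_{-1}` norm of the Cauchy transform `C[μ]`, whose Taylor
coefficient at `z₁^k z₂^l` is `μ̂(-k,-l)`. -/
noncomputable def bergNorm (μ : MeasureTheory.Measure (ℝ × ℝ)) : ℝ≥0∞ :=
  ∑' p : ℕ × ℕ, ((‖muhat μ (-(p.1 : ℤ)) (-(p.2 : ℤ))‖₊ : ℝ≥0∞)) ^ 2 /
    (((p.1 : ℝ≥0∞) + 1) * ((p.2 : ℝ≥0∞) + 1))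

/-- The Cauchy transform `C[μ](z₁,z₂)`. -/
noncomputable def cauchy (μ : MeasureTheory.Measure (ℝ × ℝ)) (z1 z2 : ℂ) : ℂ :=
  ∫ θ, ((1 - Complex.exp (Complex.I * (θ.1 : ℂ)) * z1)⁻¹ *
        (1 - Complex.exp (Complex.I * (θ.2 : ℂ)) * z2)⁻¹) ∂μ



section Aux
set_option maxHeartbeats 1000000
open MeasureTheory

lemma norm_exp_I_mul (x : ℝ) : ‖Complex.exp (Complex.I * x)‖ = 1 := by
  simp [Complex.norm_exp]

lemma expansion (μ : Measure (ℝ × ℝ)) [IsProbabilityMeasure μ] (z1 z2 : ℂ)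
    (h1 : ‖z1‖ < 1) (h2 : ‖z2‖ < 1) :
    cauchy μ z1 z2 =
      ∑' p : ℕ × ℕ, muhat μ (-(p.1 : ℤ)) (-(p.2 : ℤ)) * z1 ^ p.1 * z2 ^ p.2 := by
  set F : ℕ × ℕ → (ℝ × ℝ) → ℂ := fun p θ =>
    (Complex.exp (Complex.I * (θ.1 : ℂ)) * z1) ^ p.1 *
    (Complex.exp (Complex.I * (θ.2 : ℂ)) * z2) ^ p.2 with hF
  have hnorm : ∀ (x : ℝ) (z : ℂ), ‖Complex.exp (Complex.I * x) * z‖ = ‖z‖ := by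
    intro x z; rw [norm_mul, norm_exp_I_mul, one_mul]
  have hsum : ∀ (x : ℝ) (z : ℂ), ‖z‖ < 1 →
      Summable fun k : ℕ => ‖(Complex.exp (Complex.I * x) * z) ^ k‖ := by
    intro x z hz
    have : (fun k : ℕ => ‖(Complex.exp (Complex.I * x) * z) ^ k‖) = fun k => ‖z‖ ^ k := by
      funext k; rw [norm_pow, hnorm]
    rw [this]; exact summable_geometric_of_lt_one (norm_nonneg z) hz
  have step1 : ∀ θ : ℝ × ℝ,
      (1 - Complex.exp (Complex.I * (θ.1 : ℂ)) * z1)⁻¹ *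
      (1 - Complex.exp (Complex.I * (θ.2 : ℂ)) * z2)⁻¹ = ∑' p : ℕ × ℕ, F p θ := by
    intro θ
    rw [← tsum_geometric_of_norm_lt_one (ξ := Complex.exp (Complex.I * (θ.1 : ℂ)) * z1)
        (by rw [hnorm]; exact h1),
      ← tsum_geometric_of_norm_lt_one (ξ := Complex.exp (Complex.I * (θ.2 : ℂ)) * z2)
        (by rw [hnorm]; exact h2),
      tsum_mul_tsum_of_summable_norm (hsum _ _ h1) (hsum _ _ h2)]
  have step2 : ∀ p : ℕ × ℕ, AEStronglyMeasurable (F p) μ := by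
    intro p
    apply Continuous.aestronglyMeasurable
    fun_prop
  have hnn : ∀ (p : ℕ × ℕ) (θ : ℝ × ℝ), (‖F p θ‖₊ : ℝ≥0∞) =
      (‖z1‖₊ : ℝ≥0∞) ^ p.1 * (‖z2‖₊ : ℝ≥0∞) ^ p.2 := by
    intro p θ
    have : ‖F p θ‖ = ‖z1‖ ^ p.1 * ‖z2‖ ^ p.2 := by
      rw [hF]; simp only []; rw [norm_mul, norm_pow, norm_pow, hnorm, hnorm]
    have h' : (‖F p θ‖₊ : ℝ) = ((‖z1‖₊ ^ p.1 * ‖z2‖₊ ^ p.2 : NNReal) : ℝ) := by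
      push_cast; simpa using this
    rw [NNReal.coe_injective h']; push_cast; ring
  have step3 : ∑' p : ℕ × ℕ, ∫⁻ θ, (‖F p θ‖₊ : ℝ≥0∞) ∂μ ≠ ⊤ := by
    have hcalc : ∑' p : ℕ × ℕ, ∫⁻ θ, (‖F p θ‖₊ : ℝ≥0∞) ∂μ =
        (1 - (‖z1‖₊ : ℝ≥0∞))⁻¹ * (1 - (‖z2‖₊ : ℝ≥0∞))⁻¹ := by
      have : ∀ p : ℕ × ℕ, ∫⁻ θ, (‖F p θ‖₊ : ℝ≥0∞) ∂μ =
          (‖z1‖₊ : ℝ≥0∞) ^ p.1 * (‖z2‖₊ : ℝ≥0∞) ^ p.2 := by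
        intro p
        simp_rw [hnn p]
        rw [lintegral_const, measure_univ, mul_one]
      rw [tsum_congr this,
        ENNReal.tsum_prod (f := fun k l => (‖z1‖₊ : ℝ≥0∞) ^ k * (‖z2‖₊ : ℝ≥0∞) ^ l)]
      simp_rw [ENNReal.tsum_mul_left]
      rw [ENNReal.tsum_geometric, ENNReal.tsum_mul_right, ENNReal.tsum_geometric]
    rw [hcalc]
    have hlt : ∀ z : ℂ, ‖z‖ < 1 → (1 - (‖z‖₊ : ℝ≥0∞))⁻¹ ≠ ⊤ := by
      intro z hz
      rw [Ne, ENNReal.inv_eq_top, tsub_eq_zero_iff_le, not_le]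
      exact_mod_cast hz
    exact ENNReal.mul_ne_top (hlt _ h1) (hlt _ h2)
  have step4 : ∀ p : ℕ × ℕ, ∫ θ, F p θ ∂μ =
      muhat μ (-(p.1 : ℤ)) (-(p.2 : ℤ)) * z1 ^ p.1 * z2 ^ p.2 := by
    intro p
    have heq : ∀ θ : ℝ × ℝ, F p θ =
        Complex.exp (-Complex.I * (((-(p.1 : ℤ) : ℤ) : ℂ) * (θ.1 : ℂ) +
          ((-(p.2 : ℤ) : ℤ) : ℂ) * (θ.2 : ℂ))) * (z1 ^ p.1 * z2 ^ p.2) := by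
      intro θ
      rw [hF]; simp only []
      rw [mul_pow, mul_pow, mul_mul_mul_comm, ← Complex.exp_nat_mul, ← Complex.exp_nat_mul,
        ← Complex.exp_add]
      congr 1
      push_cast
      ring
    rw [show (fun θ => F p θ) = fun θ : ℝ × ℝ =>
        Complex.exp (-Complex.I * (((-(p.1 : ℤ) : ℤ) : ℂ) * (θ.1 : ℂ) +
          ((-(p.2 : ℤ) : ℤ) : ℂ) * (θ.2 : ℂ))) * (z1 ^ p.1 * z2 ^ p.2) from funext heq,
      integral_mul_const, muhat, mul_assoc]
  calc cauchy μ z1 z2 = ∫ θ, ∑' p : ℕ × ℕ, F p θ ∂μ := by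
        unfold cauchy; congr 1; funext θ; exact step1 θ
    _ = ∑' p : ℕ × ℕ, ∫ θ, F p θ ∂μ := integral_tsum step2 step3
    _ = _ := tsum_congr step4

lemma muhat_neg (μ : Measure (ℝ × ℝ)) (k l : ℤ) :
    muhat μ (-k) (-l) = starRingEnd ℂ (muhat μ k l) := by
  unfold muhat
  rw [← integral_conj]
  congr 1; funext θ
  rw [← Complex.exp_conj]
  congr 1
  simp [map_mul, map_add, Complex.conj_I, Complex.conj_ofReal]
  ring

lemma nnnorm_muhat_neg (μ : Measure (ℝ × ℝ)) (k l : ℤ) :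
    ‖muhat μ (-k) (-l)‖₊ = ‖muhat μ k l‖₊ := by
  rw [muhat_neg]; simp

lemma muhat_zero (μ : Measure (ℝ × ℝ)) [IsProbabilityMeasure μ] : muhat μ 0 0 = 1 := by
  simp [muhat]

lemma berg_le (μ : Measure (ℝ × ℝ)) [IsProbabilityMeasure μ] :
    bergNorm μ ≤ 2 * energy μ := by
  set g : ℕ → ℕ → ℝ≥0∞ := fun k l =>
    ((‖muhat μ (-(k : ℤ)) (-(l : ℤ))‖₊ : ℝ≥0∞)) ^ 2 /
      (((k : ℝ≥0∞) + 1) * ((l : ℝ≥0∞) + 1)) with hg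
  set A := ∑' k : ℕ, ((‖muhat μ ((k : ℤ) + 1) 0‖₊ : ℝ≥0∞)) ^ 2 / ((k : ℝ≥0∞) + 1) with hA
  set B := ∑' l : ℕ, ((‖muhat μ 0 ((l : ℤ) + 1)‖₊ : ℝ≥0∞)) ^ 2 / ((l : ℝ≥0∞) + 1) with hB
  set D := ∑' q : {k : ℤ // k ≠ 0} × ℕ,
      ((‖muhat μ q.1.1 ((q.2 : ℤ) + 1)‖₊ : ℝ≥0∞)) ^ 2 /
        ((q.1.1.natAbs : ℝ≥0∞) * ((q.2 : ℝ≥0∞) + 1)) with hD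
  have hsplit : bergNorm μ =
      g 0 0 + (∑' l : ℕ, g 0 (l + 1)) +
      ((∑' k : ℕ, g (k + 1) 0) + ∑' k : ℕ, ∑' l : ℕ, g (k + 1) (l + 1)) := by
    have hBN : bergNorm μ = ∑' p : ℕ × ℕ, g p.1 p.2 := rfl
    rw [hBN, ENNReal.tsum_prod (f := g)]
    rw [tsum_eq_zero_add' ENNReal.summable]
    rw [tsum_eq_zero_add' (f := fun l => g 0 l) ENNReal.summable]
    have : ∀ k : ℕ, ∑' l : ℕ, g (k + 1) l = g (k + 1) 0 + ∑' l : ℕ, g (k + 1) (l + 1) :=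
      fun k => tsum_eq_zero_add' ENNReal.summable
    rw [tsum_congr this, ENNReal.tsum_add, add_assoc]
  have h00 : g 0 0 = 1 := by
    simp [hg, muhat_zero]
  have h0B : (∑' l : ℕ, g 0 (l + 1)) ≤ B := by
    refine Summable.tsum_le_tsum (fun l => ?_) ENNReal.summable ENNReal.summable
    have hn : ‖muhat μ (-((0:ℕ) : ℤ)) (-(((l+1:ℕ)) : ℤ))‖₊ = ‖muhat μ 0 ((l : ℤ) + 1)‖₊ := by
      have := nnnorm_muhat_neg μ 0 ((l : ℤ) + 1)
      simpa using this
    rw [hg]; simp only []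
    rw [hn]
    refine ENNReal.div_le_div le_rfl ?_
    push_cast
    rw [zero_add, one_mul]
    exact le_self_add
  have hA0 : (∑' k : ℕ, g (k + 1) 0) ≤ A := by
    refine Summable.tsum_le_tsum (fun k => ?_) ENNReal.summable ENNReal.summable
    have hn : ‖muhat μ (-(((k+1:ℕ)) : ℤ)) (-((0:ℕ) : ℤ))‖₊ = ‖muhat μ ((k : ℤ) + 1) 0‖₊ := by
      have := nnnorm_muhat_neg μ ((k : ℤ) + 1) 0
      simpa using this
    rw [hg]; simp only []
    rw [hn]
    refine ENNReal.div_le_div le_rfl ?_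
    push_cast
    rw [zero_add, mul_one]
    exact le_self_add
  have hKL : (∑' k : ℕ, ∑' l : ℕ, g (k + 1) (l + 1)) ≤ D := by
    rw [← ENNReal.tsum_prod (f := fun k l => g (k + 1) (l + 1))]
    have hinj : Function.Injective
        (fun p : ℕ × ℕ => ((⟨(p.1 : ℤ) + 1, by omega⟩ : {k : ℤ // k ≠ 0}), p.2)) := by
      intro p q h
      simp only [Prod.mk.injEq, Subtype.mk.injEq] at h
      exact Prod.ext (by omega) h.2
    calc ∑' p : ℕ × ℕ, g (p.1 + 1) (p.2 + 1)
        ≤ ∑' p : ℕ × ℕ,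
          ((‖muhat μ (((p.1 : ℤ) + 1)) ((p.2 : ℤ) + 1)‖₊ : ℝ≥0∞)) ^ 2 /
            (((((p.1 : ℤ) + 1).natAbs : ℝ≥0∞)) * ((p.2 : ℝ≥0∞) + 1)) := by
          refine Summable.tsum_le_tsum (fun p => ?_) ENNReal.summable ENNReal.summable
          have hn : ‖muhat μ (-(((p.1+1:ℕ)) : ℤ)) (-(((p.2+1:ℕ)) : ℤ))‖₊ =
              ‖muhat μ ((p.1 : ℤ) + 1) ((p.2 : ℤ) + 1)‖₊ := by
            have := nnnorm_muhat_neg μ ((p.1 : ℤ) + 1) ((p.2 : ℤ) + 1)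
            simpa using this
          rw [hg]; simp only []
          rw [hn]
          refine ENNReal.div_le_div le_rfl ?_
          have : (((p.1 : ℤ) + 1).natAbs : ℝ≥0∞) = (p.1 : ℝ≥0∞) + 1 := by
            norm_cast
          rw [this]
          push_cast
          exact mul_le_mul' le_self_add le_self_add
      _ ≤ D := by
          rw [hD]
          exact ENNReal.tsum_comp_le_tsum_of_injective hinj
            (fun q => ((‖muhat μ q.1.1 ((q.2 : ℤ) + 1)‖₊ : ℝ≥0∞)) ^ 2 /
              ((q.1.1.natAbs : ℝ≥0∞) * ((q.2 : ℝ≥0∞) + 1)))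
  have hE : energy μ = 1 + A + B + (1/2) * D := rfl
  have h2D : (2 : ℝ≥0∞) * ((1/2) * D) = D := by
    rw [← mul_assoc, one_div, ENNReal.mul_inv_cancel (by norm_num) (by norm_num), one_mul]
  calc bergNorm μ ≤ 1 + B + (A + D) := by
        rw [hsplit, h00]; gcongr
    _ = 1 + A + B + D := by ring
    _ ≤ 2 * (1 + A + B) + D := by
        gcongr
        · exact le_mul_of_one_le_left' one_le_two
    _ = 2 * (1 + A + B) + 2 * ((1/2) * D) := by rw [h2D]
    _ = 2 * energy μ := by rw [hE]; ring

end Aux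

/-- the Cauchy transform of a probability measure of finite logarithmic
energy lies in the Bergman space of the bidisk, with squared norm
Σ |μ̂(k,l)|²/((k+1)(l+1)) bounded by a constant times the energy. -/
theorem stmt15 :
    ∃ C : ℝ≥0∞, 0 < C ∧ C ≠ ⊤ ∧
      ∀ μ : MeasureTheory.Measure (ℝ × ℝ), MeasureTheory.IsProbabilityMeasure μ →
        energy μ ≠ ⊤ →
          (∀ z1 z2 : ℂ, ‖z1‖ < 1 → ‖z2‖ < 1 →
            cauchy μ z1 z2 =
              ∑' p : ℕ × ℕ, muhat μ (-(p.1 : ℤ)) (-(p.2 : ℤ)) * z1 ^ p.1 * z2 ^ p.2) ∧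
          bergNorm μ ≤ C * energy μ ∧ bergNorm μ ≠ ⊤ := by
  refine ⟨2, by norm_num, by norm_num, ?_⟩
  intro μ hμ hE
  haveI := hμ
  refine ⟨fun z1 z2 h1 h2 => expansion μ z1 z2 h1 h2, berg_le μ, ?_⟩
  exact ne_top_of_le_ne_top (ENNReal.mul_ne_top (by norm_num) hE) (berg_le μ)
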